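/- arXiv:1712.04990 — 3 statements merged into one kernel-verified Lean document; each statement's English description precedes it below -/
import Mathlib

section
/- Let α ∈ (1, 2], γ > 1 - 1/α with γ > 0, and μ₁ ∈ ℝ. Then the series Σ_{n=0}^∞ (-1)^n Γ(1 + αn) / (n! Γ(1 + γαn)) · μ₁^n converges absolutely. -/
open Real Filter

/-- Log-convexity interpolation for the Gamma function. -/
lemma gamma_log_interp {x y t : ℝ} (hx : 0 < x) (hy : 0 < y) (ht0 : 0 ≤ t) (ht1 : t ≤ 1) :
    Real.log (Real.Gamma ((1 - t) * x + t * y)) ≤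
      (1 - t) * Real.log (Real.Gamma x) + t * Real.log (Real.Gamma y) := by
  have h := Real.convexOn_log_Gamma.2 (Set.mem_Ioi.2 hx) (Set.mem_Ioi.2 hy)
    (by linarith : (0:ℝ) ≤ 1 - t) ht0 (by ring)
  simpa using h

/-- Upper bound: Γ(x+a) ≤ Γ(x) (x+1)^a for 0 ≤ a ≤ 2, x > 0. -/
lemma gamma_upper {x a : ℝ} (hx : 0 < x) (ha0 : 0 ≤ a) (ha2 : a ≤ 2) :
    Real.Gamma (x + a) ≤ Real.Gamma x * (x + 1) ^ a := by
  have hx1 : (0:ℝ) < x + 1 := by linarith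
  have hx2 : (0:ℝ) < x + 2 := by linarith
  have hGx : 0 < Real.Gamma x := Real.Gamma_pos_of_pos hx
  have hGxa : 0 < Real.Gamma (x + a) := Real.Gamma_pos_of_pos (by linarith)
  have hcomb : (1 - a/2) * x + (a/2) * (x + 2) = x + a := by ring
  have h := gamma_log_interp hx hx2 (by linarith : (0:ℝ) ≤ a/2) (by linarith : a/2 ≤ 1)
  rw [hcomb] at h
  have hG2 : Real.Gamma (x + 2) = (x + 1) * x * Real.Gamma x := by
    have e1 : x + 2 = (x + 1) + 1 := by ring
    rw [e1, Real.Gamma_add_one (by positivity), Real.Gamma_add_one (ne_of_gt hx)]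
    ring
  have hlogG2 : Real.log (Real.Gamma (x + 2)) =
      Real.log (x + 1) + Real.log x + Real.log (Real.Gamma x) := by
    rw [hG2, Real.log_mul (by positivity) (ne_of_gt hGx), Real.log_mul (ne_of_gt hx1) (ne_of_gt hx)]
  have hlx : Real.log x ≤ Real.log (x + 1) := Real.log_le_log hx (by linarith)
  have key : Real.log (Real.Gamma (x + a)) ≤ Real.log (Real.Gamma x) + a * Real.log (x + 1) := by
    rw [hlogG2] at h
    nlinarith [h]
  calc Real.Gamma (x + a) = Real.exp (Real.log (Real.Gamma (x + a))) := (Real.exp_log hGxa).symm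
    _ ≤ Real.exp (Real.log (Real.Gamma x) + a * Real.log (x + 1)) := Real.exp_le_exp.2 key
    _ = Real.Gamma x * (x + 1) ^ a := by
        rw [Real.exp_add, Real.exp_log hGx, Real.rpow_def_of_pos hx1, mul_comm a]

/-- Lower bound: Γ(y+b) ≥ Γ(y) (y-1)^b for y > 1, b > 0. -/
lemma gamma_lower {y b : ℝ} (hy : 1 < y) (hb : 0 < b) :
    Real.Gamma y * (y - 1) ^ b ≤ Real.Gamma (y + b) := by
  have hy0 : (0:ℝ) < y := by linarith
  have hy1 : (0:ℝ) < y - 1 := by linarith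
  have hGy : 0 < Real.Gamma y := Real.Gamma_pos_of_pos hy0
  have hGy1 : 0 < Real.Gamma (y - 1) := Real.Gamma_pos_of_pos hy1
  have hGyb : 0 < Real.Gamma (y + b) := Real.Gamma_pos_of_pos (by linarith)
  have hs0 : (0:ℝ) < 1 + b := by linarith
  set s : ℝ := b / (1 + b) with hs
  have hs01 : 0 < s := by positivity
  have hs1 : s < 1 := by rw [hs, div_lt_one hs0]; linarith
  have hcomb : (1 - (1 - s)) * (y - 1) + (1 - s) * (y + b) = y := by
    rw [hs]; field_simp; ring
  have h := gamma_log_interp hy1 (by linarith : (0:ℝ) < y + b)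
    (by linarith : (0:ℝ) ≤ 1 - s) (by linarith : 1 - s ≤ 1)
  rw [hcomb] at h
  -- Γ y = (y-1) Γ(y-1)
  have hGrec : Real.Gamma y = (y - 1) * Real.Gamma (y - 1) := by
    have e1 := Real.Gamma_add_one (ne_of_gt hy1)
    rw [show y - 1 + 1 = y from by ring] at e1
    exact e1
  have hlogrec : Real.log (Real.Gamma y) = Real.log (y - 1) + Real.log (Real.Gamma (y - 1)) := by
    rw [hGrec, Real.log_mul (ne_of_gt hy1) (ne_of_gt hGy1)]
  -- derive: log Γ(y+b) ≥ log Γ y + b log(y-1)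
  have hseq : (1 - s) * b = s := by rw [hs]; field_simp; ring
  have key : Real.log (Real.Gamma y) + b * Real.log (y - 1) ≤ Real.log (Real.Gamma (y + b)) := by
    -- h : log Γ y ≤ (1-(1-s)) * log Γ (y-1) + (1-s) * log Γ (y+b)
    -- i.e. log Γ y ≤ s * (log Γ y - log (y-1)) + (1-s) * log Γ (y+b)
    have h' : Real.log (Real.Gamma y) ≤ s * (Real.log (Real.Gamma y) - Real.log (y - 1))
        + (1 - s) * Real.log (Real.Gamma (y + b)) := by
      have : Real.log (Real.Gamma (y-1)) = Real.log (Real.Gamma y) - Real.log (y - 1) := by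
        rw [hlogrec]; ring
      calc Real.log (Real.Gamma y)
          ≤ (1 - (1 - s)) * Real.log (Real.Gamma (y-1)) + (1 - s) * Real.log (Real.Gamma (y + b)) := h
        _ = s * (Real.log (Real.Gamma y) - Real.log (y - 1))
            + (1 - s) * Real.log (Real.Gamma (y + b)) := by rw [this]; ring
    have h1s : (0:ℝ) < 1 - s := by linarith
    set g := Real.log (Real.Gamma y)
    set L := Real.log (y - 1)
    set G := Real.log (Real.Gamma (y + b))
    have hbl : (1 - s) * b * L = s * L := by rw [hseq]
    have h2 : (1 - s) * (g + b * L) ≤ (1 - s) * G := by nlinarith [h', hbl]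
    exact le_of_mul_le_mul_left h2 h1s
  calc Real.Gamma y * (y - 1) ^ b
      = Real.exp (Real.log (Real.Gamma y) + b * Real.log (y - 1)) := by
        rw [Real.exp_add, Real.exp_log hGy, Real.rpow_def_of_pos hy1, mul_comm b]
    _ ≤ Real.exp (Real.log (Real.Gamma (y + b))) := Real.exp_le_exp.2 key
    _ = Real.Gamma (y + b) := Real.exp_log hGyb

/-- For α ∈ (1,2], γ > 1 - 1/α with γ > 0, and μ₁ ∈ ℝ, the series
Σ (-1)^n Γ(1+αn)/(n! Γ(1+γαn)) μ₁^n converges absolutely. -/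
theorem risk_neutral_series_summable (α γ μ₁ : ℝ)
    (hα₁ : 1 < α) (hα₂ : α ≤ 2) (hγ₀ : 0 < γ) (hγ : 1 - 1 / α < γ) :
    Summable (fun n : ℕ =>
      |(-1 : ℝ) ^ n * Real.Gamma (1 + α * n) /
        ((n.factorial : ℝ) * Real.Gamma (1 + γ * α * n)) * μ₁ ^ n|) := by
  have hα₀ : (0:ℝ) < α := by linarith
  set β : ℝ := γ * α with hβdef
  have hβ : 0 < β := by positivity
  have hβα : α - 1 < β := by
    have h1 : (1 - 1/α) * α < γ * α := by
      apply mul_lt_mul_of_pos_right hγ hα₀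
    have h2 : (1 - 1/α) * α = α - 1 := by field_simp
    rw [h2] at h1; exact h1
  set m : ℝ := |μ₁| with hm
  have hm0 : 0 ≤ m := abs_nonneg _
  -- the absolute value of each term
  have habs : ∀ n : ℕ, |(-1 : ℝ) ^ n * Real.Gamma (1 + α * n) /
      ((n.factorial : ℝ) * Real.Gamma (1 + β * n)) * μ₁ ^ n|
      = Real.Gamma (1 + α * n) / ((n.factorial : ℝ) * Real.Gamma (1 + β * n)) * m ^ n := by
    intro n
    have hGα : 0 < Real.Gamma (1 + α * n) := Real.Gamma_pos_of_pos (by positivity)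
    have hGβ : 0 < Real.Gamma (1 + β * n) := Real.Gamma_pos_of_pos (by positivity)
    have hfac : (0:ℝ) < (n.factorial : ℝ) := by exact_mod_cast n.factorial_pos
    rw [abs_mul, abs_div, abs_mul, abs_mul, abs_pow, abs_pow, abs_neg, abs_one, one_pow, one_mul,
      abs_of_pos hGα, abs_of_pos hGβ, abs_of_pos hfac]
  -- ratio test
  apply summable_of_ratio_norm_eventually_le (r := 1/2) (by norm_num)
  -- eventual bound
  have htend : Tendsto (fun n : ℕ => (n:ℝ) ^ (β + 1 - α)) atTop atTop :=
    (tendsto_rpow_atTop (by linarith)).comp tendsto_natCast_atTop_atTop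
  have hev : ∀ᶠ n : ℕ in atTop, 2 * (4 ^ α * m) / β ^ β ≤ (n:ℝ) ^ (β + 1 - α) :=
    htend.eventually_ge_atTop _
  filter_upwards [hev, eventually_ge_atTop 1] with n hn hn1
  have hnpos : (0:ℝ) < n := by exact_mod_cast hn1
  have hn1' : (1:ℝ) ≤ n := by exact_mod_cast hn1
  -- key coefficient inequality
  have hββ : (0:ℝ) < β ^ β := Real.rpow_pos_of_pos hβ β
  have HC : 2 * ((2 + α * n) ^ α * m) ≤ ((n:ℝ) + 1) * (β * n) ^ β := by
    have h4n : (2 + α * (n:ℝ)) ^ α ≤ (4 * n) ^ α := by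
      apply Real.rpow_le_rpow (by positivity) (by nlinarith) (le_of_lt hα₀)
    have h4n' : ((4:ℝ) * n) ^ α = 4 ^ α * (n:ℝ) ^ α :=
      Real.mul_rpow (by norm_num) (le_of_lt hnpos)
    have hβn : ((β:ℝ) * n) ^ β = β ^ β * (n:ℝ) ^ β :=
      Real.mul_rpow (le_of_lt hβ) (le_of_lt hnpos)
    have hstep : 2 * (4 ^ α * m) ≤ β ^ β * (n:ℝ) ^ (β + 1 - α) := by
      rw [div_le_iff₀ hββ] at hn
      linarith [hn]
    have hpowα0 : (0:ℝ) ≤ (n:ℝ) ^ α := le_of_lt (Real.rpow_pos_of_pos hnpos α)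
    have hexp : (n:ℝ) ^ (β + 1 - α) * (n:ℝ) ^ α = (n:ℝ) ^ β * (n:ℝ) := by
      rw [← Real.rpow_add hnpos]
      have : β + 1 - α + α = β + 1 := by ring
      rw [this, Real.rpow_add hnpos, Real.rpow_one]
    have hmul2 : 2 * (4 ^ α * m) * (n:ℝ) ^ α ≤ β ^ β * ((n:ℝ) ^ β * (n:ℝ)) := by
      have h3 := mul_le_mul_of_nonneg_right hstep hpowα0
      rw [mul_assoc (β ^ β)] at h3
      rwa [hexp] at h3
    have hpowα : (0:ℝ) ≤ (n:ℝ) ^ α := le_of_lt (Real.rpow_pos_of_pos hnpos α)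
    have hpowβ : (0:ℝ) < (n:ℝ) ^ β := Real.rpow_pos_of_pos hnpos β
    calc 2 * ((2 + α * n) ^ α * m)
        ≤ 2 * ((4 * n) ^ α * m) := by nlinarith [h4n]
      _ = 2 * (4 ^ α * m) * (n:ℝ) ^ α := by rw [h4n']; ring
      _ ≤ β ^ β * ((n:ℝ) ^ β * (n:ℝ)) := hmul2
      _ ≤ ((n:ℝ) + 1) * (β * n) ^ β := by rw [hβn]; nlinarith
  -- Gamma bounds
  have hGα0 : 0 < Real.Gamma (1 + α * n) := Real.Gamma_pos_of_pos (by positivity)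
  have hGβ0 : 0 < Real.Gamma (1 + β * n) := Real.Gamma_pos_of_pos (by positivity)
  have hGα1 : 0 < Real.Gamma (1 + α * (n+1:ℕ)) := Real.Gamma_pos_of_pos (by positivity)
  have hGβ1 : 0 < Real.Gamma (1 + β * (n+1:ℕ)) := Real.Gamma_pos_of_pos (by positivity)
  have HU : Real.Gamma (1 + α * ((n:ℕ)+1:ℕ)) ≤ Real.Gamma (1 + α * n) * (2 + α * n) ^ α := by
    have h := gamma_upper (x := 1 + α * n) (a := α) (by positivity) (le_of_lt hα₀) hα₂
    have e1 : 1 + α * (((n:ℕ)+1:ℕ):ℝ) = (1 + α * n) + α := by push_cast; ring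
    have e2 : (1 + α * (n:ℝ)) + 1 = 2 + α * n := by ring
    rw [e1, ← e2]; exact h
  have HL : Real.Gamma (1 + β * n) * (β * n) ^ β ≤ Real.Gamma (1 + β * ((n:ℕ)+1:ℕ)) := by
    have hy : (1:ℝ) < 1 + β * n := by nlinarith
    have h := gamma_lower (y := 1 + β * n) (b := β) hy hβ
    have e1 : 1 + β * (((n:ℕ)+1:ℕ):ℝ) = (1 + β * n) + β := by push_cast; ring
    have e2 : (1:ℝ) + β * n - 1 = β * n := by ring
    rw [e1]; rw [e2] at h; exact h
  -- assemble
  rw [Real.norm_eq_abs, Real.norm_eq_abs, abs_abs, abs_abs, habs n, habs (n+1)]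
  have hfac : (0:ℝ) < (n.factorial : ℝ) := by exact_mod_cast n.factorial_pos
  have hfacs : ((n+1).factorial : ℝ) = ((n:ℝ)+1) * (n.factorial : ℝ) := by
    rw [Nat.factorial_succ]; push_cast; ring
  have hQ : (0:ℝ) < (β * n) ^ β := Real.rpow_pos_of_pos (by positivity) β
  have hsplit : Real.Gamma (1 + α * ((n:ℕ)+1:ℕ)) /
      (((n+1).factorial : ℝ) * Real.Gamma (1 + β * ((n:ℕ)+1:ℕ))) * m ^ (n+1)
      ≤ (Real.Gamma (1 + α * n) * (2 + α * n) ^ α) * (m * m ^ n) /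
        ((((n:ℝ)+1) * (n.factorial : ℝ)) * (Real.Gamma (1 + β * n) * (β * n) ^ β)) := by
    rw [hfacs, pow_succ']
    rw [div_mul_eq_mul_div]
    apply div_le_div₀ (by positivity)
      (mul_le_mul_of_nonneg_right HU (by positivity)) (by positivity)
      (mul_le_mul_of_nonneg_left HL (by positivity))
  refine hsplit.trans ?_
  have hrw : (Real.Gamma (1 + α * n) * (2 + α * n) ^ α) * (m * m ^ n) /
        ((((n:ℝ)+1) * (n.factorial : ℝ)) * (Real.Gamma (1 + β * n) * (β * n) ^ β))
      = (Real.Gamma (1 + α * n) / ((n.factorial : ℝ) * Real.Gamma (1 + β * n)) * m ^ n)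
        * ((2 + α * n) ^ α * m / (((n:ℝ)+1) * (β * n) ^ β)) := by
    field_simp
  rw [hrw]
  rw [mul_comm]
  apply mul_le_mul_of_nonneg_right
  · rw [div_le_iff₀ (by positivity)]
    linarith [HC]
  · positivity
end

section
/- Let α = 2, γ > 1/2. Writing μ₁ = -σ²/2 (with σ > 0 small), the risk-neutral factor satisfies μ = -σ²/Γ(1+2γ) + O(σ⁴) as σ → 0, where μ = -log Σ_{n=0}^∞ (-1)^n Γ(1+2n)/(n! Γ(1+2γn)) μ₁^n. -/
set_option maxHeartbeats 800000

noncomputable def rnA (γ : ℝ) (n : ℕ) : ℝ :=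
  Real.Gamma (1 + 2 * n) / ((n.factorial : ℝ) * Real.Gamma (1 + 2 * γ * n))

lemma rnA_pos {γ : ℝ} (hγ : 0 < γ) (n : ℕ) : 0 < rnA γ n := by
  apply div_pos
  · exact Real.Gamma_pos_of_pos (by positivity)
  · exact mul_pos (by positivity) (Real.Gamma_pos_of_pos (by positivity))

lemma central_le : ∀ n : ℕ, (2*n).choose n ≤ 4 ^ n := by
  intro n
  calc (2*n).choose n ≤ ∑ i ∈ Finset.range (2*n+1), (2*n).choose i :=
        Finset.single_le_sum (fun i _ => Nat.zero_le _)
          (Finset.mem_range.2 (by omega))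
    _ = 2 ^ (2*n) := Nat.sum_range_choose (2*n)
    _ = 4 ^ n := by rw [pow_mul]; norm_num

lemma two_n_factorial_le (n : ℕ) : ((2*n).factorial : ℝ) ≤ 4^n * n.factorial * n.factorial := by
  have h := Nat.choose_mul_factorial_mul_factorial (show n ≤ 2*n by omega)
  have h2 : (2*n).factorial = (2*n).choose n * n.factorial * n.factorial := by
    rw [h.symm]; congr 2; omega
  rw [h2]
  push_cast
  have := central_le n
  have h4 : ((2*n).choose n : ℝ) ≤ 4^n := by exact_mod_cast this
  have hf : (0:ℝ) ≤ (n.factorial : ℝ) := by positivity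
  have := mul_le_mul_of_nonneg_right (mul_le_mul_of_nonneg_right h4 hf) hf
  linarith

lemma rnA_eventually_le_one {γ : ℝ} (hγ : 1/2 < γ) :
    ∃ N : ℕ, 1 ≤ N ∧ ∀ n, N ≤ n → rnA γ n ≤ 1 := by
  have hγ0 : 0 < γ := lt_trans (by norm_num) hγ
  set δ : ℝ := 2*γ - 1 with hδdef
  have hδ : 0 < δ := by simp [hδdef]; linarith
  set B : ℝ := (4:ℝ) ^ (2/δ) with hBdef
  obtain ⟨N, hN⟩ := exists_nat_ge (max (max (2/δ) B) 1)
  refine ⟨max N 1, le_max_right _ _, fun n hn => ?_⟩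
  have hn1 : 1 ≤ n := le_trans (le_max_right _ _) hn
  have hnN : (N:ℝ) ≤ n := by exact_mod_cast le_trans (le_max_left _ _) hn
  have hn2δ : 2/δ ≤ (n:ℝ) := le_trans (le_trans (le_max_left _ _) (le_max_left _ _)) (le_trans hN hnN)
  have hnB : B ≤ (n:ℝ) := le_trans (le_trans (le_max_right _ _) (le_max_left _ _)) (le_trans hN hnN)
  have hn1R : (1:ℝ) ≤ n := by exact_mod_cast hn1
  set m : ℕ := ⌊2*γ*(n:ℕ)⌋₊ with hmdef
  have hpos : (0:ℝ) ≤ 2*γ*(n:ℕ) := by positivity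
  have hm_le : (m:ℝ) ≤ 2*γ*n := Nat.floor_le hpos
  have hm_gt : 2*γ*n < (m:ℝ) + 1 := Nat.lt_floor_add_one _
  have hn_le_m : n ≤ m := Nat.le_floor (by nlinarith)
  set k : ℕ := m - n with hkdef
  have hkcast : (k:ℝ) = (m:ℝ) - n := by
    have : m - n + n = m := Nat.sub_add_cancel hn_le_m
    push_cast [hkdef]
    rw [Nat.cast_sub hn_le_m]
  have hδn : 2 ≤ δ * n := by
    have := mul_le_mul_of_nonneg_left hn2δ (le_of_lt hδ)
    calc (2:ℝ) = δ * (2/δ) := by field_simp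
      _ ≤ δ * n := this
  have hkge : δ*n/2 ≤ (k:ℝ) := by
    rw [hkcast]
    have : δ*n - 1 ≤ (m:ℝ) - n := by push_cast; nlinarith
    linarith
  -- Gamma lower bound
  have hGam : (m.factorial : ℝ) ≤ Real.Gamma (1 + 2*γ*n) := by
    have h1 : Real.Gamma ((m:ℝ) + 1) = m.factorial := Real.Gamma_nat_eq_factorial m
    rw [← h1]
    apply Real.Gamma_strictMonoOn_Ici.monotoneOn
    · simp only [Set.mem_Ici]
      have : (1:ℝ) ≤ m := by exact_mod_cast le_trans hn1 hn_le_m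
      linarith
    · simp only [Set.mem_Ici]
      nlinarith
    · linarith
  -- power bound
  have hpow : (4:ℝ)^n ≤ ((n:ℝ)+1)^k := by
    have e1 : ((n:ℝ)+1)^k = ((n:ℝ)+1) ^ ((k:ℕ):ℝ) := (Real.rpow_natCast _ k).symm
    have e2 : (4:ℝ)^n = (4:ℝ) ^ ((n:ℕ):ℝ) := (Real.rpow_natCast _ n).symm
    rw [e1, e2]
    have hb1 : (1:ℝ) ≤ (n:ℝ)+1 := by linarith
    calc (4:ℝ) ^ ((n:ℕ):ℝ) = B ^ (δ*n/2) := by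
          rw [hBdef, ← Real.rpow_mul (by norm_num : (0:ℝ) ≤ 4)]
          congr 1
          field_simp
      _ ≤ ((n:ℝ)+1) ^ (δ*n/2) := by
          apply Real.rpow_le_rpow (by positivity) (by linarith) (by positivity)
      _ ≤ ((n:ℝ)+1) ^ ((k:ℕ):ℝ) := Real.rpow_le_rpow_of_exponent_le hb1 hkge
  -- factorial bound
  have hfac : (n.factorial : ℝ) * ((n:ℝ)+1)^k ≤ (m.factorial : ℝ) := by
    have := Nat.factorial_mul_pow_le_factorial (m := n) (n := k)
    have hm : n + k = m := by omega
    rw [hm] at this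
    exact_mod_cast this
  -- numerator
  have hnum : Real.Gamma (1 + 2*(n:ℝ)) = ((2*n).factorial : ℝ) := by
    have : (1:ℝ) + 2*(n:ℝ)= ((2*n:ℕ):ℝ) + 1 := by push_cast; ring
    rw [this, Real.Gamma_nat_eq_factorial]
  have hGpos : (0:ℝ) < Real.Gamma (1 + 2*γ*n) := Real.Gamma_pos_of_pos (by positivity)
  have hfpos : (0:ℝ) < (n.factorial:ℝ) := by positivity
  rw [rnA, hnum, div_le_one (by positivity)]
  calc ((2*n).factorial : ℝ) ≤ 4^n * n.factorial * n.factorial := two_n_factorial_le n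
    _ ≤ ((n:ℝ)+1)^k * n.factorial * n.factorial := by
        have := mul_le_mul_of_nonneg_right (mul_le_mul_of_nonneg_right hpow hfpos.le) hfpos.le
        linarith
    _ = (n.factorial:ℝ) * ((n.factorial:ℝ) * ((n:ℝ)+1)^k) := by ring
    _ ≤ (n.factorial:ℝ) * Real.Gamma (1 + 2*γ*n) := by
        apply mul_le_mul_of_nonneg_left (le_trans hfac hGam) hfpos.le

lemma rnA_summable {γ : ℝ} (hγ : 1/2 < γ) : Summable (fun n => rnA γ n * (1/2:ℝ)^n) := by
  have hγ0 : 0 < γ := lt_trans (by norm_num) hγ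
  obtain ⟨N, _, hN⟩ := rnA_eventually_le_one hγ
  rw [← summable_nat_add_iff N]
  refine Summable.of_nonneg_of_le (fun n => ?_) (fun n => ?_)
    ((summable_nat_add_iff (f := fun n => ((1/2:ℝ))^n) N).2
      (summable_geometric_of_lt_one (by norm_num) (by norm_num)))
  · have := (rnA_pos hγ0 (n+N)).le
    positivity
  · have h1 := hN (n+N) (by omega)
    have h2 : (0:ℝ) ≤ (1/2:ℝ)^(n+N) := by positivity
    nlinarith

/-- For α = 2, γ > 1/2, with μ₁ = -σ²/2, the risk-neutral factor satisfies
μ = -σ²/Γ(1+2γ) + O(σ⁴) as σ → 0⁺. -/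
theorem risk_neutral_alpha_two (γ : ℝ) (hγ : 1 / 2 < γ) :
    (fun σ : ℝ =>
        (-Real.log (∑' n : ℕ, (-1 : ℝ) ^ n * Real.Gamma (1 + 2 * n) /
            ((n.factorial : ℝ) * Real.Gamma (1 + 2 * γ * n)) * (-σ ^ 2 / 2) ^ n))
          - (-σ ^ 2 / Real.Gamma (1 + 2 * γ))) =O[nhdsWithin 0 (Set.Ioi 0)]
      fun σ : ℝ => σ ^ 4 := by
  have hγ0 : 0 < γ := lt_trans (by norm_num) hγ
  obtain ⟨G, hGdef, hG⟩ : ∃ G : ℝ, G = Real.Gamma (1 + 2 * γ) ∧ 0 < G :=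
    ⟨_, rfl, Real.Gamma_pos_of_pos (by linarith)⟩
  -- key decomposition with an explicit tail constant
  obtain ⟨C, hC0, hkey⟩ : ∃ C : ℝ, 0 ≤ C ∧ ∀ σ : ℝ, 0 < σ → σ < 1 →
      ∃ E : ℝ, 0 ≤ E ∧ E ≤ C * σ^4 / 4 ∧
        (∑' n : ℕ, (-1 : ℝ) ^ n * Real.Gamma (1 + 2 * n) /
            ((n.factorial : ℝ) * Real.Gamma (1 + 2 * γ * n)) * (-σ ^ 2 / 2) ^ n)
          = 1 + σ^2/G + E := by
    have S : Summable (fun n => rnA γ n * (1/2:ℝ)^n) := rnA_summable hγ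
    have Ssh : Summable (fun n => rnA γ (n+2) * (1/2:ℝ)^(n+2)) := (summable_nat_add_iff 2).2 S
    have SC : Summable (fun n => rnA γ (n+2) * (1/2:ℝ)^n) := by
      have := Ssh.mul_right 4
      apply this.congr
      intro n
      rw [show (1/2:ℝ)^(n+2) = (1/2:ℝ)^n * (1/4) by ring]
      ring
    refine ⟨∑' n, rnA γ (n+2) * (1/2:ℝ)^n,
      tsum_nonneg fun n => by have := (rnA_pos hγ0 (n+2)).le; positivity, ?_⟩
    intro σ hσ0 hσ1
    have hx0 : (0:ℝ) < σ^2/2 := by positivity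
    have hx : σ^2/2 ≤ 1/2 := by nlinarith
    have horig : ∀ n : ℕ, (-1 : ℝ) ^ n * Real.Gamma (1 + 2 * n) /
        ((n.factorial : ℝ) * Real.Gamma (1 + 2 * γ * n)) * (-σ ^ 2 / 2) ^ n
        = rnA γ n * (σ^2/2)^n := by
      intro n
      have hneg : (-σ^2/2 : ℝ) = (-1) * (σ^2/2) := by ring
      rw [hneg, mul_pow, rnA]
      have h11 : (-1:ℝ)^n * (-1:ℝ)^n = 1 := by rw [← mul_pow]; norm_num
      calc (-1:ℝ)^n * Real.Gamma (1 + 2 * n) / ((n.factorial : ℝ) * Real.Gamma (1 + 2 * γ * n))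
            * ((-1:ℝ)^n * (σ^2/2)^n)
          = ((-1:ℝ)^n * (-1:ℝ)^n) *
            (Real.Gamma (1 + 2 * n) / ((n.factorial : ℝ) * Real.Gamma (1 + 2 * γ * n))
              * (σ^2/2)^n) := by ring
        _ = _ := by rw [h11, one_mul]
    have hsum : Summable (fun n => rnA γ n * (σ^2/2)^n) := by
      refine Summable.of_nonneg_of_le (fun n => ?_) (fun n => ?_) S
      · have := (rnA_pos hγ0 n).le; positivity
      · exact mul_le_mul_of_nonneg_left (pow_le_pow_left₀ hx0.le hx n) (rnA_pos hγ0 n).le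
    have hsumE : Summable (fun n => rnA γ (n+2) * (σ^2/2)^(n+2)) := (summable_nat_add_iff 2).2 hsum
    refine ⟨∑' n, rnA γ (n+2) * (σ^2/2)^(n+2),
      tsum_nonneg fun n => by have := (rnA_pos hγ0 (n+2)).le; positivity, ?_, ?_⟩
    · -- tail bound
      have hb : ∀ n : ℕ, rnA γ (n+2) * (σ^2/2)^(n+2)
          ≤ rnA γ (n+2) * (1/2:ℝ)^n * (σ^4/4) := by
        intro n
        have hA := (rnA_pos hγ0 (n+2)).le
        have hxn : (σ^2/2)^(n+2) ≤ (1/2:ℝ)^n * (σ^4/4) := by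
          rw [show (σ^2/2)^(n+2) = (σ^2/2)^n * (σ^4/4) by ring]
          apply mul_le_mul_of_nonneg_right (pow_le_pow_left₀ hx0.le hx n) (by positivity)
        calc rnA γ (n+2) * (σ^2/2)^(n+2) ≤ rnA γ (n+2) * ((1/2:ℝ)^n * (σ^4/4)) :=
              mul_le_mul_of_nonneg_left hxn hA
          _ = rnA γ (n+2) * (1/2:ℝ)^n * (σ^4/4) := by ring
      calc (∑' n, rnA γ (n+2) * (σ^2/2)^(n+2))
          ≤ ∑' n, rnA γ (n+2) * (1/2:ℝ)^n * (σ^4/4) :=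
            Summable.tsum_le_tsum hb hsumE (SC.mul_right _)
        _ = (∑' n, rnA γ (n+2) * (1/2:ℝ)^n) * (σ^4/4) := tsum_mul_right
        _ = (∑' n, rnA γ (n+2) * (1/2:ℝ)^n) * σ^4 / 4 := by ring
    · -- the splitting
      rw [tsum_congr horig, ← hsum.sum_add_tsum_nat_add 2]
      have e0 : rnA γ 0 = 1 := by simp [rnA, Real.Gamma_one]
      have e1 : rnA γ 1 = 2 / G := by
        rw [rnA]
        have h3 : (1:ℝ) + 2 * (1:ℕ) = ((2:ℕ):ℝ) + 1 := by push_cast; ring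
        rw [h3, Real.Gamma_nat_eq_factorial]
        norm_num [hGdef]
      rw [Finset.sum_range_succ, Finset.sum_range_one, e0, e1]
      push_cast
      field_simp
  obtain ⟨K, hKdef, hK0⟩ : ∃ K : ℝ, K = 1/G + C/4 ∧ 0 < K := ⟨_, rfl, by positivity⟩
  rw [Asymptotics.isBigO_iff]
  refine ⟨2*K^2 + C/4, ?_⟩
  have h1 : Set.Ioo (0:ℝ) 1 ∈ nhdsWithin 0 (Set.Ioi 0) :=
    Ioo_mem_nhdsGT_of_mem ⟨le_rfl, one_pos⟩
  have h2 : ∀ᶠ σ in nhdsWithin (0:ℝ) (Set.Ioi 0), K * σ^2 ≤ 1/2 := by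
    have ht : Filter.Tendsto (fun σ:ℝ => K*σ^2) (nhdsWithin 0 (Set.Ioi 0)) (nhds (K*(0:ℝ)^2)) :=
      ((continuous_const.mul (continuous_pow 2)).tendsto 0).mono_left nhdsWithin_le_nhds
    have ht' : Filter.Tendsto (fun σ:ℝ => K*σ^2) (nhdsWithin 0 (Set.Ioi 0)) (nhds 0) := by
      simpa using ht
    exact ht'.eventually_le_const (by norm_num)
  filter_upwards [h1, h2] with σ hσ hKσ
  obtain ⟨hσ0, hσ1⟩ := hσ
  obtain ⟨E, hE0, hEle, hsplit⟩ := hkey σ hσ0 hσ1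
  rw [hGdef] at hsplit
  rw [hsplit, ← hGdef]
  have hσ4 : σ^4 ≤ σ^2 := by
    have hs1 : (0:ℝ) ≤ 1 - σ^2 := by nlinarith
    nlinarith [mul_nonneg (sq_nonneg σ) hs1]
  have huK : σ^2/G + E ≤ K * σ^2 := by
    have h5 : C * σ^4 ≤ C * σ^2 := mul_le_mul_of_nonneg_left hσ4 hC0
    have h6 : E ≤ C * σ^2 / 4 := by linarith
    rw [hKdef]
    have : (1/G + C/4) * σ^2 = σ^2/G + C*σ^2/4 := by ring
    rw [this]
    linarith
  have hu0 : 0 < σ^2/G + E := by positivity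
  have hu2 : σ^2/G + E ≤ 1/2 := le_trans huK hKσ
  have h1pu : (1:ℝ) + σ^2/G + E = 1 + (σ^2/G + E) := by ring
  rw [h1pu]
  obtain ⟨u, hudef⟩ : ∃ u : ℝ, u = σ^2/G + E := ⟨_, rfl⟩
  rw [← hudef] at hu0 hu2 huK ⊢
  -- log estimate
  have hlog : |Real.log (1 + u) - u| ≤ 2 * u^2 := by
    have habs : |(-u : ℝ)| < 1 := by rw [abs_neg, abs_of_pos hu0]; linarith
    have hb := Real.abs_log_sub_add_sum_range_le habs 1
    have hs : ∑ i ∈ Finset.range 1, (-u)^(i+1)/((i:ℝ)+1) = -u := by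
      simp
    rw [hs, show (1:ℝ) - -u = 1 + u by ring, abs_neg, abs_of_pos hu0] at hb
    have h2' : u^(1+1)/(1-u) ≤ 2*u^2 := by
      rw [pow_succ, pow_one, div_le_iff₀ (by linarith : (0:ℝ) < 1 - u)]
      nlinarith [mul_nonneg (mul_nonneg hu0.le hu0.le) (by linarith : (0:ℝ) ≤ 1 - 2*u)]
    rw [neg_add_eq_sub] at hb
    exact le_trans hb h2'
  have hu2sq : u^2 ≤ K^2 * σ^4 := by
    have hKσ2 : (0:ℝ) ≤ K * σ^2 := by positivity
    have := mul_le_mul huK huK hu0.le hKσ2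
    calc u^2 = u * u := sq u
      _ ≤ (K*σ^2) * (K*σ^2) := this
      _ = K^2 * σ^4 := by ring
  have hdec : (-Real.log (1+u)) - (-σ^2/G) = -(Real.log (1+u) - u) - E := by
    rw [hudef]; ring
  rw [Real.norm_eq_abs, Real.norm_eq_abs, hdec]
  have habs2 : |-(Real.log (1+u) - u) - E| ≤ |Real.log (1+u) - u| + E := by
    calc |-(Real.log (1+u) - u) - E| ≤ |-(Real.log (1+u) - u)| + |E| := abs_sub _ _
      _ = |Real.log (1+u) - u| + E := by rw [abs_neg, abs_of_nonneg hE0]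
  calc |-(Real.log (1+u) - u) - E| ≤ |Real.log (1+u) - u| + E := habs2
    _ ≤ 2*u^2 + C * σ^4/4 := by linarith
    _ ≤ 2*(K^2*σ^4) + C * σ^4/4 := by linarith
    _ = (2*K^2 + C/4) * σ^4 := by ring
    _ = (2*K^2 + C/4) * |σ^4| := by rw [abs_of_nonneg (by positivity : (0:ℝ) ≤ σ^4)]
end

section
/- Let α ∈ (1, 2], γ ∈ (1 - 1/α, α], A ∈ ℝ, B > 0. Then the double series Σ_{n≥0, m≥1} (-1)^n / (n! Γ(1 - γ(n-m)/α)) · A^n · B^{(m-n)/α} converges absolutely. -/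
open Real Filter


private lemma gamma_interp_upper {x s : ℝ} (hx : 0 < x) (hs0 : 0 ≤ s) (hs1 : s ≤ 1) :
    Real.Gamma (x + s) ≤ Real.Gamma x * x ^ s := by
  have hΓx := Real.Gamma_pos_of_pos hx
  have h := Real.convexOn_log_Gamma.2 (Set.mem_Ioi.2 hx)
    (Set.mem_Ioi.2 (by linarith : (0:ℝ) < x + 1)) (by linarith : (0:ℝ) ≤ 1 - s) hs0 (by ring)
  simp only [smul_eq_mul, Function.comp_apply] at h
  have hxs : (1 - s) * x + s * (x + 1) = x + s := by ring
  rw [hxs, Real.Gamma_add_one hx.ne',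
      Real.log_mul hx.ne' hΓx.ne'] at h
  have h2 : Real.log (Real.Gamma (x + s)) ≤ Real.log (Real.Gamma x * x ^ s) := by
    rw [Real.log_mul hΓx.ne' (Real.rpow_pos_of_pos hx s).ne', Real.log_rpow hx]
    nlinarith [h]
  have := Real.exp_le_exp.2 h2
  rwa [Real.exp_log (Real.Gamma_pos_of_pos (by linarith : (0:ℝ) < x + s)),
      Real.exp_log (by positivity)] at this

private lemma gamma_interp_lower {x θ : ℝ} (hx : 0 < x) (h0 : 0 ≤ θ) (h1 : θ ≤ 1) :
    x * Real.Gamma x ≤ Real.Gamma (x + θ) * (x + θ) ^ (1 - θ) := by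
  have hxθ : (0:ℝ) < x + θ := by linarith
  have hΓ := Real.Gamma_pos_of_pos hxθ
  have h := Real.convexOn_log_Gamma.2 (Set.mem_Ioi.2 hxθ)
    (Set.mem_Ioi.2 (by linarith : (0:ℝ) < x + θ + 1)) h0 (by linarith : (0:ℝ) ≤ 1 - θ) (by ring)
  simp only [smul_eq_mul, Function.comp_apply] at h
  have hxs : θ * (x + θ) + (1 - θ) * (x + θ + 1) = x + 1 := by ring
  rw [hxs, Real.Gamma_add_one hx.ne', Real.Gamma_add_one hxθ.ne',
      Real.log_mul hx.ne' (Real.Gamma_pos_of_pos hx).ne',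
      Real.log_mul hxθ.ne' hΓ.ne'] at h
  have h2 : Real.log (x * Real.Gamma x) ≤ Real.log (Real.Gamma (x + θ) * (x + θ) ^ (1 - θ)) := by
    rw [Real.log_mul hx.ne' (Real.Gamma_pos_of_pos hx).ne',
        Real.log_mul hΓ.ne' (Real.rpow_pos_of_pos hxθ _).ne', Real.log_rpow hxθ]
    nlinarith [h]
  have := Real.exp_le_exp.2 h2
  rwa [Real.exp_log (by positivity), Real.exp_log (by positivity)] at this

private lemma summable_S1 {θ : ℝ} (hθ0 : 0 < θ) (hθ1 : θ ≤ 1) {c : ℝ} (hc : 0 < c) :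
    Summable (fun k : ℕ => c ^ k / Real.Gamma (1 + θ * k)) := by
  refine summable_of_ratio_norm_eventually_le (r := 1/2) (by norm_num) ?_
  have htop : Tendsto (fun k : ℕ => ((1 + θ * k : ℝ)) ^ θ) atTop atTop := by
    apply (tendsto_rpow_atTop hθ0).comp
    apply tendsto_atTop_add_const_left
    exact (tendsto_natCast_atTop_atTop (R := ℝ)).const_mul_atTop hθ0
  filter_upwards [htop.eventually_ge_atTop (4 * c)] with k hk
  set x : ℝ := 1 + θ * k with hxdef
  have hx1 : (1:ℝ) ≤ x := by
    have : (0:ℝ) ≤ θ * k := by positivity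
    simp only [hxdef]; linarith
  have hx0 : (0:ℝ) < x := by linarith
  have hΓx := Real.Gamma_pos_of_pos hx0
  have hΓxθ := Real.Gamma_pos_of_pos (by linarith : (0:ℝ) < x + θ)
  -- key : 2 * c * Real.Gamma x ≤ Real.Gamma (x + θ)
  have hsplit : x ^ θ * x ^ (1 - θ) = x := by
    rw [← Real.rpow_add hx0]; norm_num
  have hrpow2 : (x + θ) ^ (1 - θ) ≤ 2 * x ^ (1 - θ) := by
    calc (x + θ) ^ (1 - θ) ≤ (2 * x) ^ (1 - θ) := by
          apply Real.rpow_le_rpow (by linarith) (by linarith) (by linarith)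
      _ = 2 ^ (1 - θ) * x ^ (1 - θ) := Real.mul_rpow (by norm_num) hx0.le
      _ ≤ 2 * x ^ (1 - θ) := by
          have h2 : (2:ℝ) ^ (1 - θ) ≤ 2 ^ (1:ℝ) :=
            Real.rpow_le_rpow_of_exponent_le (by norm_num) (by linarith)
          rw [Real.rpow_one] at h2
          have := Real.rpow_pos_of_pos hx0 (1 - θ)
          nlinarith
  have key : 2 * c * Real.Gamma x ≤ Real.Gamma (x + θ) := by
    have hlow := gamma_interp_lower hx0 hθ0.le hθ1
    have h1 : 2 * c * (x + θ) ^ (1 - θ) * Real.Gamma x ≤ x * Real.Gamma x := by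
      have h2 : 2 * c * (x + θ) ^ (1 - θ) ≤ x := by
        calc 2 * c * (x + θ) ^ (1 - θ) ≤ 2 * c * (2 * x ^ (1 - θ)) := by
              have : (0:ℝ) ≤ 2 * c := by positivity
              nlinarith [hrpow2]
          _ = 4 * c * x ^ (1 - θ) := by ring
          _ ≤ x ^ θ * x ^ (1 - θ) := by
              have := Real.rpow_pos_of_pos hx0 (1 - θ)
              nlinarith [hk]
          _ = x := hsplit
      nlinarith [hΓx]
    have hpos := Real.rpow_pos_of_pos (by linarith : (0:ℝ) < x + θ) (1 - θ)
    nlinarith [hlow]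
  -- conclude ratio bound
  have harg : 1 + θ * ((k:ℝ) + 1) = x + θ := by simp only [hxdef]; ring
  have hterm : ∀ t : ℕ, ‖c ^ t / Real.Gamma (1 + θ * t)‖ = c ^ t / Real.Gamma (1 + θ * t) := by
    intro t
    have : (0:ℝ) < 1 + θ * t := by positivity
    have := Real.Gamma_pos_of_pos this
    rw [Real.norm_eq_abs, abs_of_nonneg (by positivity)]
  rw [hterm, hterm]
  push_cast
  rw [harg]
  have heq : (1/2 : ℝ) * (c ^ k / Real.Gamma x) = c ^ (k+1) / (2 * c * Real.Gamma x) := by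
    rw [pow_succ]
    field_simp
  rw [heq]
  apply div_le_div_of_nonneg_left (by positivity) (by positivity) key

private lemma summable_S2 {θ : ℝ} (hθ0 : 0 < θ) (hθ1 : θ < 1) {c : ℝ} (hc : 0 < c) :
    Summable (fun j : ℕ => Real.Gamma (θ * j) * c ^ j / j.factorial) := by
  refine summable_of_ratio_norm_eventually_le (r := 1/2) (by norm_num) ?_
  have htop : Tendsto (fun j : ℕ => ((j:ℝ)) ^ (θ - 1)) atTop (nhds 0) := by
    have := tendsto_rpow_neg_atTop (by linarith : (0:ℝ) < 1 - θ)
    rw [show -(1-θ) = θ - 1 by ring] at this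
    exact this.comp tendsto_natCast_atTop_atTop
  filter_upwards [eventually_ge_atTop 1, htop.eventually_le_const
    (by positivity : (0:ℝ) < 1/(2*c))] with j hj1 hj2
  have hj0 : (0:ℝ) < j := by exact_mod_cast hj1
  have hθj : (0:ℝ) < θ * j := by positivity
  have hΓ := Real.Gamma_pos_of_pos hθj
  have hup := gamma_interp_upper hθj hθ0.le hθ1.le
  have hterm : ∀ t : ℕ, ‖Real.Gamma (θ * t) * c ^ t / t.factorial‖
      = Real.Gamma (θ * t) * c ^ t / t.factorial := by
    intro t
    rw [Real.norm_eq_abs, abs_of_nonneg]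
    have : (0:ℝ) ≤ Real.Gamma (θ * t) := Real.Gamma_nonneg_of_nonneg (by positivity)
    positivity
  rw [hterm, hterm]
  have harg : θ * ((j:ℕ) + 1 : ℕ) = θ * j + θ := by push_cast; ring
  rw [harg]
  -- Γ(θj+θ) ≤ Γ(θj) * (θj)^θ ≤ Γ(θj) * j^θ
  have hpowθ : (θ * j) ^ θ ≤ (j:ℝ) ^ θ :=
    Real.rpow_le_rpow hθj.le (by nlinarith) hθ0.le
  have hjθ : c * (j:ℝ) ^ θ ≤ ((j:ℝ) + 1) / 2 := by
    have hsplit : (j:ℝ) ^ θ = (j:ℝ) ^ (θ - 1) * j := by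
      rw [show θ = (θ - 1) + 1 by ring, Real.rpow_add hj0, Real.rpow_one]
      ring_nf
    calc c * (j:ℝ) ^ θ = ((j:ℝ) ^ (θ-1) * c) * j := by rw [hsplit]; ring
      _ ≤ (1/(2*c) * c) * j := by
          have h2 : (0:ℝ) ≤ (j:ℝ) := hj0.le
          nlinarith [mul_nonneg (mul_nonneg (sub_nonneg.2 hj2) hc.le) h2]
      _ = (j:ℝ)/2 := by field_simp
      _ ≤ ((j:ℝ) + 1)/2 := by linarith
  calc Real.Gamma (θ * j + θ) * c ^ (j+1) / (j+1).factorial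
      ≤ (Real.Gamma (θ * j) * (j:ℝ) ^ θ) * c ^ (j+1) / (j+1).factorial := by
        have : Real.Gamma (θ * j + θ) ≤ Real.Gamma (θ * j) * (j:ℝ) ^ θ := by
          calc Real.Gamma (θ * j + θ) ≤ Real.Gamma (θ * j) * (θ * j) ^ θ := hup
            _ ≤ Real.Gamma (θ * j) * (j:ℝ) ^ θ := by nlinarith
        gcongr
    _ ≤ 1/2 * (Real.Gamma (θ * j) * c ^ j / j.factorial) := by
        rw [Nat.factorial_succ]
        push_cast
        have hjf : (0:ℝ) < (j.factorial : ℝ) := by exact_mod_cast j.factorial_pos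
        rw [div_le_iff₀ (by positivity), pow_succ]
        have expand : 1/2 * (Real.Gamma (θ * j) * c ^ j / j.factorial) * (((j:ℝ)+1) * j.factorial)
            = Real.Gamma (θ * j) * c ^ j * (((j:ℝ)+1)/2) := by field_simp
        rw [expand]
        calc Real.Gamma (θ * j) * (j:ℝ) ^ θ * (c ^ j * c)
            = Real.Gamma (θ * j) * c ^ j * (c * (j:ℝ) ^ θ) := by ring
          _ ≤ Real.Gamma (θ * j) * c ^ j * (((j:ℝ)+1)/2) := by
              have : (0:ℝ) ≤ Real.Gamma (θ * j) * c ^ j := by positivity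
              nlinarith


private lemma inv_abs_Gamma_one_sub_le {x : ℝ} (hx : 0 < x) :
    |Real.Gamma (1 - x)|⁻¹ ≤ Real.Gamma x := by
  have hΓx := Real.Gamma_pos_of_pos hx
  by_cases h : Real.Gamma (1 - x) = 0
  · rw [h, abs_zero, inv_zero]; exact hΓx.le
  · have hrefl := Real.Gamma_mul_Gamma_one_sub x
    have hsin : Real.sin (π * x) ≠ 0 := by
      intro h0
      rw [h0, div_zero] at hrefl
      exact h ((mul_eq_zero.1 hrefl).resolve_left hΓx.ne')
    have hval : Real.Gamma (1 - x) = π / (Real.sin (π * x) * Real.Gamma x) := by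
      field_simp at hrefl ⊢
      linear_combination hrefl
    have hsinabs : (0:ℝ) < |Real.sin (π * x)| := abs_pos.2 hsin
    have habs : |Real.Gamma (1 - x)| = π / (|Real.sin (π * x)| * Real.Gamma x) := by
      rw [hval, abs_div, abs_of_pos Real.pi_pos, abs_mul, abs_of_pos hΓx]
    rw [habs, inv_div]
    calc |Real.sin (π * x)| * Real.Gamma x / π ≤ 1 * Real.Gamma x / π := by
          gcongr
          exact abs_sin_le_one _
      _ = Real.Gamma x / π := by rw [one_mul]
      _ ≤ Real.Gamma x := div_le_self hΓx.le (by linarith [Real.pi_gt_three])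

private lemma exists_bound_of_summable {f : ℕ → ℝ} (hf : Summable f) :
    ∃ C, 0 ≤ C ∧ ∀ k, f k ≤ C := by
  obtain ⟨C, hC⟩ := hf.tendsto_atTop_zero.bddAbove_range
  exact ⟨max C 0, le_max_right _ _,
    fun k => le_trans (hC (Set.mem_range_self k)) (le_max_left _ _)⟩

set_option maxHeartbeats 1000000 in
/-- Absolute convergence of the call-price double series: for α ∈ (1,2],
γ ∈ (1-1/α, α], A ∈ ℝ, B > 0, the series
Σ_{n≥0,m≥1} (-1)^n/(n! Γ(1-γ(n-m)/α)) A^n B^{(m-n)/α} converges absolutely.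
(The index p.2 ranges over ℕ and m = p.2 + 1 ≥ 1.) -/
theorem call_price_double_series_summable (α γ A B : ℝ)
    (hα₁ : 1 < α) (hα₂ : α ≤ 2) (hγ₁ : 1 - 1 / α < γ) (hγ₂ : γ ≤ α)
    (hB : 0 < B) :
    Summable (fun p : ℕ × ℕ =>
      |(-1 : ℝ) ^ p.1 /
          ((p.1.factorial : ℝ) *
            Real.Gamma (1 - γ * ((p.1 : ℝ) - (p.2 + 1)) / α)) *
        A ^ p.1 * B ^ (((p.2 : ℝ) + 1 - p.1) / α)|) := by
  have hα0 : (0:ℝ) < α := by linarith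
  have hγ0 : 0 < γ := by
    have h1 : 1/α < 1 := by rw [div_lt_one hα0]; exact hα₁
    linarith
  set θ : ℝ := γ / α with hθdef
  have hθ0 : 0 < θ := div_pos hγ0 hα0
  have hθ1 : θ ≤ 1 := by rw [hθdef, div_le_one hα0]; exact hγ₂
  set B' : ℝ := B ^ (1/α) with hB'def
  have hB'0 : 0 < B' := Real.rpow_pos_of_pos hB _
  -- constant C₁ for the region n ≤ m+1
  obtain ⟨C₁, hC₁0, hC₁⟩ := exists_bound_of_summable
    (summable_S1 hθ0 hθ1 (by positivity : (0:ℝ) < 2 * B'))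
  -- constant C₂ for the region n ≥ m+2
  obtain ⟨C₂, hC₂0, hC₂⟩ : ∃ C, 0 ≤ C ∧ ∀ j : ℕ, 1 ≤ j →
      |Real.Gamma (1 - θ * j)|⁻¹ * ((2*|A|+2)/B')^j / j.factorial ≤ C := by
    rcases eq_or_lt_of_le hθ1 with hθeq | hθlt
    · refine ⟨1, zero_le_one, fun j hj => ?_⟩
      have hz : Real.Gamma (1 - θ * j) = 0 := by
        have hcast : (1:ℝ) - θ * j = -((j - 1 : ℕ) : ℝ) := by
          rw [hθeq, Nat.cast_sub hj]
          push_cast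
          ring
        rw [hcast, Real.Gamma_neg_nat_eq_zero]
      rw [hz, abs_zero, inv_zero, zero_mul, zero_div]
      norm_num
    · obtain ⟨C, hC0, hC⟩ := exists_bound_of_summable
        (summable_S2 hθ0 hθlt (by positivity : (0:ℝ) < (2*|A|+2)/B'))
      refine ⟨C, hC0, fun j hj => le_trans ?_ (hC j)⟩
      have hθj : (0:ℝ) < θ * j := by
        have : (0:ℝ) < (j:ℝ) := by exact_mod_cast hj
        positivity
      gcongr
      exact inv_abs_Gamma_one_sub_le hθj
  -- the comparison function
  set u : ℕ → ℝ := fun n => (2*|A|)^n / n.factorial with hudef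
  have hu : Summable u := Real.summable_pow_div_factorial _
  have hu0 : ∀ n, 0 ≤ u n := fun n => by rw [hudef]; positivity
  have hhalf : Summable (fun n : ℕ => (1/2:ℝ)^n) :=
    summable_geometric_of_lt_one (by norm_num) (by norm_num)
  have hshift : Summable (fun m : ℕ => ((1:ℝ)/2)^(m+1)) := (summable_nat_add_iff 1).2 hhalf
  have hushift : Summable (fun m : ℕ => u (m+1)) := (summable_nat_add_iff 1).2 hu
  have hG1 : Summable (fun p : ℕ × ℕ => (C₁ * u p.1) * ((1:ℝ)/2)^(p.2+1)) :=
    Summable.mul_of_nonneg (f := fun n : ℕ => C₁ * u n) (g := fun m : ℕ => ((1:ℝ)/2)^(m+1))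
      (hu.mul_left C₁) hshift
      (fun n => mul_nonneg hC₁0 (hu0 n)) (fun m => by positivity)
  have hG2 : Summable (fun p : ℕ × ℕ => (C₂ * ((1:ℝ)/2)^p.1) * u (p.2+1)) :=
    Summable.mul_of_nonneg (f := fun n : ℕ => C₂ * ((1:ℝ)/2)^n) (g := fun m : ℕ => u (m+1))
      (hhalf.mul_left C₂) hushift
      (fun n => mul_nonneg hC₂0 (by positivity)) (fun m => hu0 (m+1))
  have hG : Summable (fun p : ℕ × ℕ =>
      C₁ * u p.1 * (1/2)^(p.2+1) + C₂ * (1/2)^p.1 * u (p.2+1)) := hG1.add hG2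
  apply Summable.of_nonneg_of_le (fun p => abs_nonneg _) ?_ hG
  rintro ⟨n, m⟩
  simp only
  -- canonical form of the term
  have hcan : |(-1 : ℝ) ^ n / ((n.factorial : ℝ) *
        Real.Gamma (1 - γ * ((n : ℝ) - ((m:ℝ) + 1)) / α)) *
        A ^ n * B ^ (((m : ℝ) + 1 - n) / α)|
      = |A|^n * B ^ (((m : ℝ) + 1 - n) / α) /
        ((n.factorial : ℝ) * |Real.Gamma (1 - γ * ((n : ℝ) - ((m:ℝ) + 1)) / α)|) := by
    rw [abs_mul, abs_mul, abs_div, abs_pow, abs_pow, abs_neg, abs_one, one_pow, abs_mul,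
        Nat.abs_cast, abs_of_pos (Real.rpow_pos_of_pos hB _)]
    ring
  rw [hcan]
  rcases le_or_gt n (m+1) with hcase | hcase
  · -- region n ≤ m + 1
    set k := m + 1 - n with hkdef
    have hkn : k + n = m + 1 := Nat.sub_add_cancel hcase
    have hcast : (m:ℝ) + 1 - n = (k:ℝ) := by
      have : ((k + n : ℕ) : ℝ) = ((m + 1 : ℕ) : ℝ) := by rw [hkn]
      push_cast at this
      linarith
    have harg : 1 - γ * ((n:ℝ) - ((m:ℝ) + 1)) / α = 1 + θ * k := by
      rw [show (n:ℝ) - ((m:ℝ)+1) = -(k:ℝ) by linarith, hθdef]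
      ring
    have hBpow : B ^ (((m:ℝ) + 1 - n) / α) = B'^k := by
      rw [hcast, show ((k:ℝ))/α = (1/α) * (k:ℝ) by ring,
          Real.rpow_mul hB.le, ← hB'def, Real.rpow_natCast]
    have hΓpos : 0 < Real.Gamma (1 + θ * k) := Real.Gamma_pos_of_pos (by positivity)
    rw [harg, hBpow, abs_of_pos hΓpos]
    have h2k : (2:ℝ)^k * (1/2)^k = 1 := by rw [← mul_pow]; norm_num
    have hw : B'^k / Real.Gamma (1 + θ * k) ≤ C₁ * (1/2)^k := by
      have hb := hC₁ k
      rw [mul_pow] at hb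
      have key : B'^k / Real.Gamma (1 + θ * k)
          = ((2:ℝ)^k * B'^k / Real.Gamma (1 + θ * k)) * (1/2)^k := by
        have : (2:ℝ)^k * B'^k / Real.Gamma (1 + θ * k) * (1/2)^k
            = B'^k * ((2:ℝ)^k * (1/2)^k) / Real.Gamma (1 + θ * k) := by ring
        rw [this, h2k, mul_one]
      rw [key]
      exact mul_le_mul_of_nonneg_right hb (by positivity)
    have hhalfk : ((1:ℝ)/2)^k = (1/2)^(m+1) * 2^n := by
      rw [← hkn, pow_add]
      have h1 : ((1:ℝ)/2)^n * 2^n = 1 := by rw [← mul_pow]; norm_num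
      rw [mul_assoc, h1, mul_one]
    have hstep : |A|^n * B'^k / ((n.factorial : ℝ) * Real.Gamma (1 + θ * k))
        ≤ C₁ * u n * (1/2)^(m+1) := by
      calc |A|^n * B'^k / ((n.factorial : ℝ) * Real.Gamma (1 + θ * k))
          = (|A|^n / n.factorial) * (B'^k / Real.Gamma (1 + θ * k)) := by ring
        _ ≤ (|A|^n / n.factorial) * (C₁ * (1/2)^k) :=
            mul_le_mul_of_nonneg_left hw (by positivity)
        _ = C₁ * u n * (1/2)^(m+1) := by
            rw [hhalfk, hudef]
            simp only
            rw [mul_pow]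
            ring
    refine le_trans hstep (le_add_of_nonneg_right ?_)
    have := hu0 (m+1)
    positivity
  · -- region n ≥ m + 2
    set j := n - (m + 1) with hjdef
    have hj1 : 1 ≤ j := by omega
    have hjn : m + 1 + j = n := by omega
    have hcast : (n:ℝ) - ((m:ℝ) + 1) = (j:ℝ) := by
      have : ((m + 1 + j : ℕ) : ℝ) = (n : ℝ) := by rw [hjn]
      push_cast at this
      linarith
    have harg : 1 - γ * ((n:ℝ) - ((m:ℝ) + 1)) / α = 1 - θ * j := by
      rw [hcast, hθdef]; ring
    have hBpow : B ^ (((m:ℝ) + 1 - n) / α) = (B'^j)⁻¹ := by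
      have hexp : ((m:ℝ) + 1 - n)/α = -((1/α) * (j:ℝ)) := by
        have h' : (m:ℝ) + 1 - n = -(j:ℝ) := by linarith
        rw [h']; ring
      rw [hexp, Real.rpow_neg hB.le, Real.rpow_mul hB.le, ← hB'def, Real.rpow_natCast]
    rw [harg, hBpow]
    have hfact : ((m+1).factorial * j.factorial : ℕ) ≤ n.factorial := by
      rw [← hjn]
      exact Nat.le_of_dvd (Nat.factorial_pos _)
        (Nat.factorial_mul_factorial_dvd_factorial_add (m+1) j)
    have hfactR : ((m+1).factorial : ℝ) * (j.factorial : ℝ) ≤ (n.factorial : ℝ) := by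
      exact_mod_cast hfact
    have hApow : |A|^n = |A|^(m+1) * |A|^j := by rw [← hjn, pow_add]
    have h2j : (2:ℝ)^j * (1/2)^j = 1 := by rw [← mul_pow]; norm_num
    set G := |Real.Gamma (1 - θ * j)| with hGdef
    have hG0 : 0 ≤ G := abs_nonneg _
    have hpow : (|A|/B')^j * (2:ℝ)^j ≤ ((2*|A|+2)/B')^j := by
      rw [← mul_pow]
      apply pow_le_pow_left₀ (by positivity)
      rw [div_mul_eq_mul_div]
      gcongr
      linarith [abs_nonneg A]
    have hq : G⁻¹ * (|A|/B')^j / j.factorial ≤ C₂ * (1/2)^j := by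
      calc G⁻¹ * (|A|/B')^j / j.factorial
          = (G⁻¹ * ((|A|/B')^j * (2:ℝ)^j) / j.factorial) * (1/2)^j := by
            have : (G⁻¹ * ((|A|/B')^j * (2:ℝ)^j) / j.factorial) * (1/2)^j
                = (G⁻¹ * (|A|/B')^j / j.factorial) * ((2:ℝ)^j * (1/2)^j) := by ring
            rw [this, h2j, mul_one]
        _ ≤ (G⁻¹ * ((2*|A|+2)/B')^j / j.factorial) * (1/2)^j := by
            gcongr
        _ ≤ C₂ * (1/2)^j := by
            have := hC₂ j hj1
            gcongr
    have hhalfj : ((1:ℝ)/2)^j = (1/2)^n * 2^(m+1) := by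
      rw [← hjn, pow_add]
      have h1 : ((1:ℝ)/2)^(m+1) * 2^(m+1) = 1 := by rw [← mul_pow]; norm_num
      linear_combination (-(((1:ℝ)/2)^j)) * h1
    have hstep : |A|^n * (B'^j)⁻¹ / ((n.factorial : ℝ) * G)
        ≤ C₂ * (1/2)^n * u (m+1) := by
      calc |A|^n * (B'^j)⁻¹ / ((n.factorial : ℝ) * G)
          = |A|^n * (B'^j)⁻¹ * G⁻¹ / (n.factorial : ℝ) := by
            rw [div_eq_mul_inv, div_eq_mul_inv, mul_inv]
            ring
        _ ≤ |A|^n * (B'^j)⁻¹ * G⁻¹ / (((m+1).factorial : ℝ) * (j.factorial : ℝ)) := by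
            apply div_le_div_of_nonneg_left _ (by positivity) hfactR
            have : (0:ℝ) ≤ G⁻¹ := inv_nonneg.2 hG0
            positivity
        _ = (|A|^(m+1) / (m+1).factorial) * (G⁻¹ * (|A|/B')^j / j.factorial) := by
            rw [hApow, div_pow]
            field_simp
        _ ≤ (|A|^(m+1) / (m+1).factorial) * (C₂ * (1/2)^j) :=
            mul_le_mul_of_nonneg_left hq (by positivity)
        _ = C₂ * (1/2)^n * u (m+1) := by
            rw [hhalfj, hudef]
            simp only
            rw [mul_pow]
            ring
    refine le_trans hstep (le_add_of_nonneg_left ?_)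
    have := hu0 n
    positivity
end
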